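/- Let x_0, x_1, ..., x_T be a sequence in ℝⁿ and v_0, v_1, ..., v_T another sequence such that for some constants γ ∈ (0, 1/√2), ξ ≥ 0, P ≥ 1, and all t ≥ 1: ‖v_t - x_t‖² ≤ (1 + ξ/(Pγ))² · ∑_{k=1}^{t} (2γ²)^k · ‖x_{t-k+1} - x_{t-k}‖². If additionally ‖x_{s+1} - x_s‖ ≤ α_s·M for all s with ∑_s α_s² < ∞, then ∑_{t=1}^∞ ‖v_t - x_t‖² ≤ (1 + ξ/(Pγ))² · (2γ²/(1-2γ²)) · M² · ∑_{s=0}^∞ α_s². -/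

import Mathlib

open scoped BigOperators

/-- Accumulated error bound for Quantized TopK SGD: if for all `t ≥ 1`
`‖v_t - x_t‖² ≤ (1 + ξ/(Pγ))² ∑_{k=1}^{t} (2γ²)^k ‖x_{t-k+1} - x_{t-k}‖²`,
and `‖x_{s+1} - x_s‖ ≤ α_s M` with square-summable `α`, then
`∑_{t=1}^∞ ‖v_t - x_t‖² ≤ (1 + ξ/(Pγ))² (2γ²/(1-2γ²)) M² ∑_s α_s²`. -/
theorem accumulated_error_bound {n : ℕ}
    (x v : ℕ → EuclideanSpace ℝ (Fin n)) (γ ξ P M : ℝ) (α : ℕ → ℝ)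
    (hγ0 : 0 < γ) (hγ1 : γ < 1 / Real.sqrt 2) (hξ : 0 ≤ ξ) (hP : 1 ≤ P)
    (hM : 0 ≤ M) (hα : ∀ s, 0 ≤ α s) (hα2 : Summable fun s => (α s) ^ 2)
    (hbound : ∀ t : ℕ, 1 ≤ t →
      ‖v t - x t‖ ^ 2 ≤ (1 + ξ / (P * γ)) ^ 2 *
        ∑ k ∈ Finset.Icc 1 t, (2 * γ ^ 2) ^ k * ‖x (t - k + 1) - x (t - k)‖ ^ 2)
    (hstep : ∀ s : ℕ, ‖x (s + 1) - x s‖ ≤ α s * M) :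
    ∑' t : ℕ, ‖v (t + 1) - x (t + 1)‖ ^ 2
      ≤ (1 + ξ / (P * γ)) ^ 2 * (2 * γ ^ 2 / (1 - 2 * γ ^ 2)) * M ^ 2 *
          ∑' s : ℕ, (α s) ^ 2 := by
  set r : ℝ := 2 * γ ^ 2 with hrdef
  have hr0 : 0 ≤ r := by positivity
  have hr1 : r < 1 := by
    have hsq : γ ^ 2 < (1 / Real.sqrt 2) ^ 2 := by
      exact pow_lt_pow_left₀ hγ1 hγ0.le (by norm_num)
    have h12 : (1 / Real.sqrt 2 : ℝ) ^ 2 = 1 / 2 := by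
      rw [div_pow, one_pow, Real.sq_sqrt (by norm_num : (2:ℝ) ≥ 0)]
    rw [hrdef]
    nlinarith [hsq, h12]
  have h1r : 0 < 1 - r := by linarith
  set C : ℝ := (1 + ξ / (P * γ)) ^ 2 with hCdef
  have hC0 : 0 ≤ C := sq_nonneg _
  -- the product family
  let F : ℕ × ℕ → ℝ := fun p => r ^ (p.1 + 1) * (α p.2 ^ 2 * M ^ 2)
  have hFdef : F = fun p => r ^ (p.1 + 1) * (α p.2 ^ 2 * M ^ 2) := rfl
  have hgeom : Summable (fun k : ℕ => r ^ (k + 1)) := by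
    have := (summable_geometric_of_lt_one hr0 hr1).mul_right r
    simpa [pow_succ] using this
  have hg : Summable (fun j : ℕ => α j ^ 2 * M ^ 2) := hα2.mul_right _
  have hF : Summable F :=
    Summable.mul_of_nonneg (f := fun k : ℕ => r ^ (k + 1))
      (g := fun j : ℕ => α j ^ 2 * M ^ 2) hgeom hg
      (fun k => by positivity) (fun j => by positivity)
  have htgeom : ∑' k : ℕ, r ^ (k + 1) = r / (1 - r) := by
    have : (fun k : ℕ => r ^ (k + 1)) = fun k : ℕ => r ^ k * r := by
      funext k; rw [pow_succ]
    rw [this, tsum_mul_right, tsum_geometric_of_lt_one hr0 hr1]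
    field_simp
  have htF : ∑' p : ℕ × ℕ, F p = r / (1 - r) * ((∑' j : ℕ, α j ^ 2) * M ^ 2) := by
    rw [Summable.tsum_prod' hF (fun a => hg.mul_left (r ^ (a + 1)))]
    have hinner : ∀ a : ℕ, ∑' b : ℕ, F (a, b)
        = r ^ (a + 1) * ((∑' j : ℕ, α j ^ 2) * M ^ 2) := by
      intro a
      simp only [hFdef]
      rw [tsum_mul_left, tsum_mul_right]
    simp only [hinner]
    rw [tsum_mul_right, htgeom]
  have key : ∀ s : Finset ℕ,
      ∑ t ∈ s, ‖v (t + 1) - x (t + 1)‖ ^ 2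
        ≤ C * (r / (1 - r)) * M ^ 2 * ∑' j : ℕ, α j ^ 2 := by
    intro s
    have h1 : ∀ t ∈ s, ‖v (t + 1) - x (t + 1)‖ ^ 2
        ≤ C * ∑ k ∈ Finset.Icc 1 (t + 1), r ^ k * (α (t + 1 - k) ^ 2 * M ^ 2) := by
      intro t _
      refine (hbound (t + 1) (by omega)).trans ?_
      refine mul_le_mul_of_nonneg_left ?_ hC0
      refine Finset.sum_le_sum fun k hk => ?_
      refine mul_le_mul_of_nonneg_left ?_ (by positivity)
      calc ‖x (t + 1 - k + 1) - x (t + 1 - k)‖ ^ 2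
          ≤ (α (t + 1 - k) * M) ^ 2 :=
            pow_le_pow_left₀ (norm_nonneg _) (hstep _) 2
        _ = α (t + 1 - k) ^ 2 * M ^ 2 := mul_pow _ _ _
    have h2 : ∑ t ∈ s, ∑ k ∈ Finset.Icc 1 (t + 1), r ^ k * (α (t + 1 - k) ^ 2 * M ^ 2)
        ≤ ∑' p : ℕ × ℕ, F p := by
      have hsig : ∑ t ∈ s, ∑ k ∈ Finset.Icc 1 (t + 1), r ^ k * (α (t + 1 - k) ^ 2 * M ^ 2)
          = ∑ p ∈ s.sigma (fun t => Finset.Icc 1 (t + 1)),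
              r ^ p.2 * (α (p.1 + 1 - p.2) ^ 2 * M ^ 2) := by
        rw [Finset.sum_sigma]
      rw [hsig]
      set e : (Σ _ : ℕ, ℕ) → ℕ × ℕ := fun p => (p.2 - 1, p.1 + 1 - p.2) with hedef
      have hmem : ∀ p ∈ s.sigma (fun t => Finset.Icc 1 (t + 1)),
          1 ≤ p.2 ∧ p.2 ≤ p.1 + 1 := by
        intro p hp
        rcases Finset.mem_sigma.mp hp with ⟨_, hk⟩
        exact Finset.mem_Icc.mp hk
      have hterm : ∀ p ∈ s.sigma (fun t => Finset.Icc 1 (t + 1)),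
          r ^ p.2 * (α (p.1 + 1 - p.2) ^ 2 * M ^ 2) = F (e p) := by
        intro p hp
        obtain ⟨h1', h2'⟩ := hmem p hp
        simp only [hFdef, hedef]
        congr 2
        omega
      rw [Finset.sum_congr rfl hterm]
      have hinj : ∀ p ∈ s.sigma (fun t => Finset.Icc 1 (t + 1)),
          ∀ q ∈ s.sigma (fun t => Finset.Icc 1 (t + 1)), e p = e q → p = q := by
        rintro ⟨t1, k1⟩ hp ⟨t2, k2⟩ hq heq
        obtain ⟨hp1, hp2⟩ := hmem _ hp
        obtain ⟨hq1, hq2⟩ := hmem _ hq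
        simp only [hedef, Prod.mk.injEq] at heq
        simp only at hp1 hp2 hq1 hq2
        obtain ⟨e1, e2⟩ := heq
        have hk : k1 = k2 := by omega
        have ht : t1 = t2 := by omega
        subst hk; subst ht; rfl
      rw [← Finset.sum_image hinj]
      exact Summable.sum_le_tsum _ (fun p _ => by simp only [hFdef]; positivity) hF
    calc ∑ t ∈ s, ‖v (t + 1) - x (t + 1)‖ ^ 2
        ≤ ∑ t ∈ s, C * ∑ k ∈ Finset.Icc 1 (t + 1), r ^ k * (α (t + 1 - k) ^ 2 * M ^ 2) :=
          Finset.sum_le_sum h1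
      _ = C * ∑ t ∈ s, ∑ k ∈ Finset.Icc 1 (t + 1), r ^ k * (α (t + 1 - k) ^ 2 * M ^ 2) :=
          (Finset.mul_sum _ _ _).symm
      _ ≤ C * ∑' p : ℕ × ℕ, F p := mul_le_mul_of_nonneg_left h2 hC0
      _ = C * (r / (1 - r)) * M ^ 2 * ∑' j : ℕ, α j ^ 2 := by rw [htF]; ring
  have hsum : Summable (fun t : ℕ => ‖v (t + 1) - x (t + 1)‖ ^ 2) :=
    summable_of_sum_le (fun t => by positivity) key
  exact Summable.tsum_le_of_sum_le hsum key
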